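/- For a, b ∈ ℤ_{≥0}^n, if the window notation of w_a is lexicographically greater than that of w_b, then the window notation of w_{π·a} is lexicographically greater than that of w_{π·b}, where π·(a_1,...,a_n) = (a_n + 1, a_1, ..., a_{n−1}). Moreover w_{π·a} = π ∘ w_a. -/

import Mathlib

def piAct (n : ℕ) [NeZero n] (a : Fin n → ℕ) : Fin n → ℕ :=
  fun i => a (i - 1) + if i = 0 then 1 else 0

def winF (n : ℕ) (a : Fin n → ℕ) : List ℤ :=
  List.insertionSort (· ≤ ·) (List.ofFn fun j : Fin n => ((j : ℤ) + 1) + n * (a j : ℤ))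

private lemma lex_map_add_one {l1 l2 : List ℤ} (h : List.Lex (· < ·) l1 l2) :
    List.Lex (· < ·) (l1.map (· + 1)) (l2.map (· + 1)) := by
  induction h with
  | nil => exact List.Lex.nil
  | cons _ ih => exact List.Lex.cons ih
  | rel h => exact List.Lex.rel (by simpa using h)

private lemma winF_shift (n : ℕ) [NeZero n] (a : Fin n → ℕ) :
    winF n (piAct n a) = (winF n a).map (· + 1) := by
  obtain ⟨m, rfl⟩ := Nat.exists_eq_succ_of_ne_zero (NeZero.ne n)
  apply fun hp h1 h2 => List.Perm.eq_of_pairwise' (r := ((· ≤ ·) : ℤ → ℤ → Prop)) h1 h2 hp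
  · have h1 : List.Perm (winF (m + 1) (piAct (m + 1) a))
        (List.ofFn (fun j : Fin (m + 1) => ((j : ℤ) + 1) + (m + 1) * (piAct (m + 1) a j : ℤ))) :=
      List.perm_insertionSort _ _
    have h2 : (List.ofFn fun j : Fin (m + 1) => ((j : ℤ) + 1) + (m + 1) * (piAct (m + 1) a j : ℤ))
        = List.ofFn ((fun j : Fin (m + 1) => (((j : ℤ) + 1) + (m + 1) * (a j : ℤ)) + 1) ∘
            (Equiv.subRight (1 : Fin (m + 1)))) := by
      congr 1
      funext i
      simp only [piAct, Function.comp_apply, Equiv.subRight_apply]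
      have h := Fin.coe_sub_one i
      push_cast
      by_cases hi : i = 0
      · rw [if_pos hi] at h
        have hv : (i : ℕ) = 0 := by simp [hi]
        rw [h, hv]
        push_cast
        simp only [if_pos hi]
        ring
      · rw [if_neg hi] at h
        have hv : 1 ≤ (i : ℕ) := Nat.one_le_iff_ne_zero.mpr (by
          exact fun h0 => hi (Fin.ext (h0.trans (Fin.val_zero (m + 1)).symm)))
        have h' : (((i - 1 : Fin (m + 1)) : ℕ) : ℤ) = ((i : ℕ) : ℤ) - 1 := by rw [h]; omega
        rw [h']
        simp only [if_neg hi]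
        ring
    have h3 : List.Perm
        (List.ofFn ((fun j : Fin (m + 1) => (((j : ℤ) + 1) + (m + 1) * (a j : ℤ)) + 1) ∘
            (Equiv.subRight (1 : Fin (m + 1)))))
        (List.ofFn (fun j : Fin (m + 1) => (((j : ℤ) + 1) + (m + 1) * (a j : ℤ)) + 1)) :=
      Equiv.Perm.ofFn_comp_perm _ _
    have h4 : List.ofFn (fun j : Fin (m + 1) => (((j : ℤ) + 1) + (m + 1) * (a j : ℤ)) + 1)
        = (List.ofFn (fun j : Fin (m + 1) => ((j : ℤ) + 1) + (m + 1) * (a j : ℤ))).map (· + 1) := by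
      rw [List.map_ofFn]; rfl
    have h5 : List.Perm
        ((List.ofFn (fun j : Fin (m + 1) => ((j : ℤ) + 1) + (m + 1) * (a j : ℤ))).map (· + 1))
        ((winF (m + 1) a).map (· + 1)) :=
      ((List.perm_insertionSort _ _).symm).map _
    exact ((h1.trans (h2 ▸ h3)).trans (h4 ▸ h5))
  · exact List.pairwise_insertionSort _ _
  · exact List.Pairwise.map _ (fun x y h => by simpa using h) (List.pairwise_insertionSort _ _)

theorem stmt_6 (n : ℕ) [NeZero n] (a b : Fin n → ℕ) :
    (List.Lex (· < ·) (winF n b) (winF n a) →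
      List.Lex (· < ·) (winF n (piAct n b)) (winF n (piAct n a))) ∧
    winF n (piAct n a) = (winF n a).map (· + 1) := by
  refine ⟨fun h => ?_, winF_shift n a⟩
  rw [winF_shift, winF_shift]
  exact lex_map_add_one h
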